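/- arXiv:1303.2280 — 3 statements merged into one kernel-verified Lean document; each statement's English description precedes it below -/
import Mathlib

section
/- Let A, G be real n×n matrices and P, Q symmetric positive definite n×n matrices satisfying the Lyapunov-type identity Aᵀ P + P A = M − Q for some symmetric matrix M ⪯ 0 (or more specifically, suppose Aᵀ P + P A + Q ⪯ 0). If 2 ‖P‖ ‖G‖ < λmin(Q), then (A+G)ᵀ P + P (A+G) is negative definite. -/
set_option synthInstance.maxHeartbeats 1000000
set_option maxHeartbeats 1000000

open Matrix

/-- Induced `l2` (spectral) operator norm of a real matrix. -/
noncomputable def opNorm {m n : ℕ} (M : Matrix (Fin m) (Fin n) ℝ) : ℝ :=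
  ‖(LinearMap.toContinuousLinearMap (Matrix.toEuclideanLin M) :
      EuclideanSpace ℝ (Fin n) →L[ℝ] EuclideanSpace ℝ (Fin m))‖

/-- Smallest eigenvalue of a symmetric real matrix (via the Rayleigh quotient). -/
noncomputable def lamMin {n : ℕ} (M : Matrix (Fin n) (Fin n) ℝ) : ℝ :=
  ⨅ x : {x : EuclideanSpace ℝ (Fin n) // ‖x‖ = 1},
    (inner ℝ ((Matrix.toEuclideanLin M) x.1) x.1 : ℝ)

/-- Largest eigenvalue of a symmetric real matrix (via the Rayleigh quotient). -/
noncomputable def lamMax {n : ℕ} (M : Matrix (Fin n) (Fin n) ℝ) : ℝ :=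
  ⨆ x : {x : EuclideanSpace ℝ (Fin n) // ‖x‖ = 1},
    (inner ℝ ((Matrix.toEuclideanLin M) x.1) x.1 : ℝ)

/-- A real matrix is Hurwitz if all its (complex) eigenvalues, i.e. the roots of its
characteristic polynomial over `ℂ`, have negative real part. -/
def IsHurwitz {ι : Type*} [Fintype ι] [DecidableEq ι] (A : Matrix ι ι ℝ) : Prop :=
  ∀ μ : ℂ, ((A.map (Complex.ofReal)).charpoly).IsRoot μ → μ.re < 0

noncomputable def euc {n : ℕ} (x : Fin n → ℝ) : EuclideanSpace ℝ (Fin n) :=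
  (WithLp.equiv 2 _).symm x

lemma euc_mulVec {n : ℕ} (M : Matrix (Fin n) (Fin n) ℝ) (x : Fin n → ℝ) :
    Matrix.toEuclideanLin M (euc x) = euc (M *ᵥ x) :=
  Matrix.toEuclideanLin_apply_piLp_toLp M x

lemma dot_eq_inner {n : ℕ} (u v : Fin n → ℝ) :
    u ⬝ᵥ v = (inner ℝ (euc u) (euc v) : ℝ) := by
  rw [euc, euc, WithLp.equiv_symm_apply, EuclideanSpace.inner_toLp_toLp]
  simp [dotProduct_comm]

lemma norm_euc_mulVec_le {n : ℕ} (M : Matrix (Fin n) (Fin n) ℝ) (x : Fin n → ℝ) :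
    ‖euc (M *ᵥ x)‖ ≤ opNorm M * ‖euc x‖ := by
  rw [← euc_mulVec]
  have := (LinearMap.toContinuousLinearMap (Matrix.toEuclideanLin M) :
      EuclideanSpace ℝ (Fin n) →L[ℝ] EuclideanSpace ℝ (Fin n)).le_opNorm (euc x)
  simpa [opNorm] using this

lemma lamMin_mul_le {n : ℕ} (Q : Matrix (Fin n) (Fin n) ℝ) (y : EuclideanSpace ℝ (Fin n)) :
    lamMin Q * ‖y‖ ^ 2 ≤ (inner ℝ (Matrix.toEuclideanLin Q y) y : ℝ) := by
  rcases eq_or_ne y 0 with rfl | h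
  · simp
  · have hy : (0:ℝ) < ‖y‖ := norm_pos_iff.mpr h
    have hb : BddBelow (Set.range fun x : {x : EuclideanSpace ℝ (Fin n) // ‖x‖ = 1} =>
        (inner ℝ ((Matrix.toEuclideanLin Q) x.1) x.1 : ℝ)) := by
      refine ⟨-(opNorm Q), ?_⟩
      rintro r ⟨x, rfl⟩
      have h1 := abs_real_inner_le_norm ((Matrix.toEuclideanLin Q) x.1) x.1
      have h2 : ‖(Matrix.toEuclideanLin Q) x.1‖ ≤ opNorm Q * ‖x.1‖ := by
        have := (LinearMap.toContinuousLinearMap (Matrix.toEuclideanLin Q) :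
          EuclideanSpace ℝ (Fin n) →L[ℝ] EuclideanSpace ℝ (Fin n)).le_opNorm x.1
        simpa [opNorm] using this
      have hx := x.2
      rw [hx] at h1 h2
      simp only [mul_one] at h1 h2
      cases abs_le.mp h1 with
      | intro hl hr => linarith
    have hu : ‖(‖y‖⁻¹ • y : EuclideanSpace ℝ (Fin n))‖ = 1 := by
      rw [norm_smul, norm_inv, norm_norm, inv_mul_cancel₀ hy.ne']
    have hle := ciInf_le hb (⟨‖y‖⁻¹ • y, hu⟩ : {x : EuclideanSpace ℝ (Fin n) // ‖x‖ = 1})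
    have hval : (inner ℝ ((Matrix.toEuclideanLin Q) (‖y‖⁻¹ • y)) (‖y‖⁻¹ • y) : ℝ)
        = ‖y‖⁻¹ * ‖y‖⁻¹ * (inner ℝ (Matrix.toEuclideanLin Q y) y : ℝ) := by
      rw [_root_.map_smul, real_inner_smul_left, real_inner_smul_right]
      ring
    rw [hval] at hle
    have h2 : lamMin Q * ‖y‖ ^ 2 ≤ (‖y‖⁻¹ * ‖y‖⁻¹ * (inner ℝ (Matrix.toEuclideanLin Q y) y : ℝ)) * ‖y‖ ^ 2 := by
      exact mul_le_mul_of_nonneg_right hle (by positivity)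
    have h3 : (‖y‖⁻¹ * ‖y‖⁻¹ * (inner ℝ (Matrix.toEuclideanLin Q y) y : ℝ)) * ‖y‖ ^ 2
        = (‖y‖⁻¹ * ‖y‖) * (‖y‖⁻¹ * ‖y‖) * (inner ℝ (Matrix.toEuclideanLin Q y) y : ℝ) := by
      ring
    rw [h3, inv_mul_cancel₀ hy.ne'] at h2
    simpa using h2

/-- Lyapunov perturbation: if `Aᵀ P + P A + Q ⪯ 0` and `2 ‖P‖ ‖G‖ < λmin(Q)`,
then `(A+G)ᵀ P + P (A+G)` is negative definite. -/
theorem lyap_perturbation {n : ℕ} (A G P Q : Matrix (Fin n) (Fin n) ℝ)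
    (hP : P.PosDef) (hQ : Q.PosDef)
    (hLyap : (-(Aᵀ * P + P * A + Q)).PosSemidef)
    (hpert : 2 * opNorm P * opNorm G < lamMin Q) :
    (-((A + G)ᵀ * P + P * (A + G))).PosDef := by
  have hPH : Pᴴ = P := hP.1
  have hT : ∀ M : Matrix (Fin n) (Fin n) ℝ, Mᴴ = Mᵀ := fun M => by
    ext i j; simp [conjTranspose_apply]
  have hPt : Pᵀ = P := by rw [← hT P]; exact hPH
  rw [posDef_iff_dotProduct_mulVec]
  constructor
  · show _ᴴ = _
    rw [hT]
    simp only [transpose_neg, transpose_add, transpose_mul, transpose_transpose, hPt]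
    abel
  · intro x hx
    have hM : -((A + G)ᵀ * P + P * (A + G))
        = (-(Aᵀ * P + P * A + Q)) + Q + (-(Gᵀ * P + P * G)) := by
      rw [transpose_add]; noncomm_ring
    rw [hM]
    have hsplit : star x ⬝ᵥ (((-(Aᵀ * P + P * A + Q)) + Q + (-(Gᵀ * P + P * G))) *ᵥ x)
        = star x ⬝ᵥ ((-(Aᵀ * P + P * A + Q)) *ᵥ x) + x ⬝ᵥ (Q *ᵥ x)
          + (-(x ⬝ᵥ ((Gᵀ * P) *ᵥ x) + x ⬝ᵥ ((P * G) *ᵥ x))) := by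
      simp [Matrix.add_mulVec, Matrix.neg_mulVec, dotProduct_add, dotProduct_neg]
    rw [hsplit]
    have h1 : 0 ≤ star x ⬝ᵥ ((-(Aᵀ * P + P * A + Q)) *ᵥ x) := hLyap.dotProduct_mulVec_nonneg x
    -- Q term
    have h2 : lamMin Q * ‖euc x‖ ^ 2 ≤ x ⬝ᵥ (Q *ᵥ x) := by
      rw [dot_eq_inner, ← euc_mulVec, real_inner_comm]
      exact lamMin_mul_le Q (euc x)
    -- cross terms
    have hc1 : x ⬝ᵥ ((Gᵀ * P) *ᵥ x) = (P *ᵥ x) ⬝ᵥ (G *ᵥ x) := by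
      rw [← Matrix.mulVec_mulVec, Matrix.dotProduct_mulVec, Matrix.vecMul_transpose,
        dotProduct_comm]
    have hc2 : x ⬝ᵥ ((P * G) *ᵥ x) = (P *ᵥ x) ⬝ᵥ (G *ᵥ x) := by
      rw [← Matrix.mulVec_mulVec, Matrix.dotProduct_mulVec, ← Matrix.mulVec_transpose]
      rw [hPt]
    have hcross : (P *ᵥ x) ⬝ᵥ (G *ᵥ x) ≤ opNorm P * opNorm G * ‖euc x‖ ^ 2 := by
      rw [dot_eq_inner]
      calc (inner ℝ (euc (P *ᵥ x)) (euc (G *ᵥ x)) : ℝ)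
          ≤ ‖euc (P *ᵥ x)‖ * ‖euc (G *ᵥ x)‖ := real_inner_le_norm _ _
        _ ≤ (opNorm P * ‖euc x‖) * (opNorm G * ‖euc x‖) := by
            have hP1 := norm_euc_mulVec_le P x
            have hG1 := norm_euc_mulVec_le G x
            exact mul_le_mul hP1 hG1 (norm_nonneg _) (mul_nonneg (norm_nonneg _) (norm_nonneg _))
        _ = opNorm P * opNorm G * ‖euc x‖ ^ 2 := by ring
    have hxnorm : (0:ℝ) < ‖euc x‖ ^ 2 := by
      have h0 : euc x ≠ 0 := by
        simpa [euc] using (WithLp.equiv 2 (Fin n → ℝ)).symm.injective.ne_iff.mpr hx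
      exact pow_pos (norm_pos_iff.mpr h0) 2
    rw [hc1, hc2]
    nlinarith [mul_lt_mul_of_pos_right hpert hxnorm, h1, h2, hcross]
end

section
/- Suppose A is a real n×n matrix, B is n×m, and there exists a symmetric positive definite Z such that Z Aᵀ + A Z − B Bᵀ is negative definite. Then with K = −(1/2) Bᵀ Z⁻¹, the closed-loop matrix A + B K is Hurwitz (all eigenvalues have negative real part). -/
open Matrix

lemma mulVec_star_real' {n m : ℕ} (M : Matrix (Fin n) (Fin m) ℝ) (v : Fin m → ℂ) :
    (M.map Complex.ofReal) *ᵥ (star v) = star ((M.map Complex.ofReal) *ᵥ v) := by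
  funext j
  simp only [Pi.star_apply, Matrix.mulVec, dotProduct, Matrix.map_apply]
  rw [star_sum]
  refine Finset.sum_congr rfl fun k _ => ?_
  simp [Complex.star_def, mul_comm]

lemma re_quad_pos {n : ℕ} {M : Matrix (Fin n) (Fin n) ℝ} (hM : M.PosDef)
    (v : Fin n → ℂ) (hv : v ≠ 0) :
    0 < (star v ⬝ᵥ ((M.map Complex.ofReal) *ᵥ v)).re := by
  set x : Fin n → ℝ := fun j => (v j).re with hx
  set y : Fin n → ℝ := fun j => (v j).im with hy
  have key : (star v ⬝ᵥ ((M.map Complex.ofReal) *ᵥ v)).re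
      = x ⬝ᵥ (M *ᵥ x) + y ⬝ᵥ (M *ᵥ y) := by
    simp only [dotProduct, Matrix.mulVec, Matrix.map_apply, Pi.star_apply,
      Complex.re_sum, Finset.mul_sum, Finset.sum_mul, ← Finset.sum_add_distrib]
    refine Finset.sum_congr rfl fun j _ => ?_
    refine Finset.sum_congr rfl fun k _ => ?_
    simp [Complex.mul_re, Complex.star_def, hx, hy]
  rw [key]
  have hsd := hM.posSemidef
  have hx0 : (0:ℝ) ≤ x ⬝ᵥ (M *ᵥ x) := by simpa using hsd.dotProduct_mulVec_nonneg x
  have hy0 : (0:ℝ) ≤ y ⬝ᵥ (M *ᵥ y) := by simpa using hsd.dotProduct_mulVec_nonneg y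
  by_cases h : x = 0
  · have hyne : y ≠ 0 := by
      intro h2
      apply hv
      funext j
      have : (v j).re = 0 := congrFun h j
      have : (v j).im = 0 := congrFun h2 j
      exact Complex.ext (congrFun h j) (congrFun h2 j)
    have := hM.dotProduct_mulVec_pos hyne
    simp only [star_trivial] at this
    linarith
  · have := hM.dotProduct_mulVec_pos h
    simp only [star_trivial] at this
    linarith

/-- If `Z ≻ 0` -/
theorem state_feedback_hurwitz {n m : ℕ} (A : Matrix (Fin n) (Fin n) ℝ)
    (B : Matrix (Fin n) (Fin m) ℝ) (Z : Matrix (Fin n) (Fin n) ℝ) (hZ : Z.PosDef)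
    (hLMI : (-(Z * Aᵀ + A * Z - B * Bᵀ)).PosDef) :
    IsHurwitz (A + B * (-((1/2 : ℝ) • (Bᵀ * Z⁻¹)))) := by
  intro μ hroot
  set Acl : Matrix (Fin n) (Fin n) ℝ := A + B * (-((1/2 : ℝ) • (Bᵀ * Z⁻¹))) with hAcl
  -- basic facts about Z
  have hZunit : IsUnit Z := hZ.isUnit
  have h1 : Z⁻¹ * Z = 1 := nonsing_inv_mul Z (isUnit_iff_isUnit_det Z |>.mp hZunit)
  have h2 : Z * Z⁻¹ = 1 := mul_nonsing_inv Z (isUnit_iff_isUnit_det Z |>.mp hZunit)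
  have hZt : Zᵀ = Z := hZ.isHermitian
  -- the Lyapunov identity
  have hAclZ : Acl * Z = A * Z - (1/2 : ℝ) • (B * Bᵀ) := by
    rw [hAcl, Matrix.add_mul, Matrix.mul_neg, Matrix.mul_smul, Matrix.neg_mul,
      Matrix.smul_mul, Matrix.mul_assoc B (Bᵀ * Z⁻¹) Z, Matrix.mul_assoc Bᵀ Z⁻¹ Z, h1,
      Matrix.mul_one, sub_eq_add_neg]
  have hZAclT : Z * Aclᵀ = Z * Aᵀ - (1/2 : ℝ) • (B * Bᵀ) := by
    have hAclT : Aclᵀ = Aᵀ - (1/2 : ℝ) • (Z⁻¹ * (B * Bᵀ)) := by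
      rw [hAcl, transpose_add, transpose_mul, transpose_neg, transpose_smul, transpose_mul,
        transpose_transpose, transpose_nonsing_inv, hZt, Matrix.neg_mul, Matrix.smul_mul,
        Matrix.mul_assoc, sub_eq_add_neg]
    rw [hAclT, Matrix.mul_sub, Matrix.mul_smul, ← Matrix.mul_assoc, h2, Matrix.one_mul]
  have hLyap : Z * Aclᵀ + Acl * Z = Z * Aᵀ + A * Z - B * Bᵀ := by
    rw [hZAclT, hAclZ]
    module
  -- eigenvector of the transpose
  have hdet : (scalar (Fin n) μ - (Acl.map Complex.ofReal)).det = 0 := by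
    have := hroot
    rw [Polynomial.IsRoot, Matrix.charpoly, eval_det, matPolyEquiv_charmatrix,
      Polynomial.eval_sub, Polynomial.eval_X, Polynomial.eval_C] at this
    exact this
  have hsct : (scalar (Fin n) μ)ᵀ = scalar (Fin n) μ := by
    ext i j
    by_cases h : i = j <;> simp [Matrix.scalar, Matrix.transpose_apply, Matrix.diagonal, h]
    · exact fun h2 => absurd h2.symm h
  have hdet' : (scalar (Fin n) μ - (Acl.map Complex.ofReal)ᵀ).det = 0 := by
    rw [← Matrix.det_transpose, transpose_sub, transpose_transpose, hsct]
    exact hdet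
  obtain ⟨v, hv0, hvz⟩ := (Matrix.exists_mulVec_eq_zero_iff).mpr hdet'
  have hv : (Acl.map Complex.ofReal)ᵀ *ᵥ v = μ • v := by
    have := hvz
    rw [Matrix.sub_mulVec] at this
    have hsc : scalar (Fin n) μ *ᵥ v = μ • v := by
      funext i
      simp [Matrix.scalar, Matrix.mulVec_diagonal]
    rw [hsc, sub_eq_zero] at this
    exact this.symm
  -- quadratic forms
  set q : ℂ := star v ⬝ᵥ ((Z.map Complex.ofReal) *ᵥ v) with hq
  have hterm1 : star v ⬝ᵥ (((Z * Aclᵀ).map Complex.ofReal) *ᵥ v) = μ * q := by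
    rw [show ((Z * Aclᵀ).map Complex.ofReal)
        = (Z.map Complex.ofReal) * ((Aclᵀ).map Complex.ofReal) from
      RingHom.mapMatrix Complex.ofRealHom |>.map_mul Z Aclᵀ,
      ← Matrix.mulVec_mulVec, Matrix.transpose_map, hv, Matrix.mulVec_smul,
      dotProduct_smul, hq, smul_eq_mul]
  have hterm2 : star v ⬝ᵥ (((Acl * Z).map Complex.ofReal) *ᵥ v) = (starRingEnd ℂ μ) * q := by
    rw [show ((Acl * Z).map Complex.ofReal)
        = (Acl.map Complex.ofReal) * (Z.map Complex.ofReal) from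
      RingHom.mapMatrix Complex.ofRealHom |>.map_mul Acl Z,
      ← Matrix.mulVec_mulVec, Matrix.dotProduct_mulVec, ← Matrix.mulVec_transpose]
    have : (Acl.map Complex.ofReal)ᵀ *ᵥ star v = (starRingEnd ℂ μ) • star v := by
      rw [← Matrix.transpose_map, mulVec_star_real', Matrix.transpose_map, hv, star_smul]
      rfl
    rw [this, smul_dotProduct, hq, smul_eq_mul]
  have hsum : star v ⬝ᵥ (((Z * Aclᵀ + Acl * Z).map Complex.ofReal) *ᵥ v)
      = (μ + starRingEnd ℂ μ) * q := by
    rw [show ((Z * Aclᵀ + Acl * Z).map Complex.ofReal)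
        = ((Z * Aclᵀ).map Complex.ofReal) + ((Acl * Z).map Complex.ofReal) from
      RingHom.mapMatrix Complex.ofRealHom |>.map_add _ _,
      Matrix.add_mulVec, dotProduct_add, hterm1, hterm2, add_mul]
  -- negativity from the LMI
  have hQneg : star v ⬝ᵥ (((Z * Aᵀ + A * Z - B * Bᵀ).map Complex.ofReal) *ᵥ v)
      = -(star v ⬝ᵥ (((-(Z * Aᵀ + A * Z - B * Bᵀ)).map Complex.ofReal) *ᵥ v)) := by
    rw [show ((-(Z * Aᵀ + A * Z - B * Bᵀ)).map Complex.ofReal)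
        = -((Z * Aᵀ + A * Z - B * Bᵀ).map Complex.ofReal) by
      ext i j; simp]
    rw [Matrix.neg_mulVec, dotProduct_neg, neg_neg]
  have hQpos := re_quad_pos hLMI v hv0
  have hqpos := re_quad_pos hZ v hv0
  rw [← hq] at hqpos
  have hre : ((μ + starRingEnd ℂ μ) * q).re < 0 := by
    rw [← hsum, hLyap, hQneg]
    simpa using hQpos
  have hrecalc : ((μ + starRingEnd ℂ μ) * q).re = 2 * μ.re * q.re := by
    rw [Complex.add_conj]
    rw [show ((2 * μ.re : ℝ) : ℂ) * q = (2 * μ.re : ℝ) • q by simp [Complex.real_smul]]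
    simp [Complex.smul_re]
  rw [hrecalc] at hre
  nlinarith
end

section
/- Let A, B, H, L be real matrices of compatible sizes, and let P, Q be symmetric positive definite matrices satisfying the Riccati equation Aᵀ P + P A − P B Bᵀ P + Q = 0. If ‖B L + H‖ < λmin(Q) / (2 λmax(P)) − β for some β ≥ 0, then with K = −(1/2) Bᵀ P, the matrix (A + H + B(K + L))ᵀ P + P (A + H + B(K + L)) + 2 β P is negative definite; in particular all eigenvalues of A + H + B(K+L) have real part less than −β. -/
open Matrix

/-! ### Auxiliary lemmas -/

lemma aux_norm_mul_le {m n : ℕ} (M : Matrix (Fin m) (Fin n) ℝ) (x : EuclideanSpace ℝ (Fin n)) :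
    ‖Matrix.toEuclideanLin M x‖ ≤ opNorm M * ‖x‖ := by
  have := (LinearMap.toContinuousLinearMap (Matrix.toEuclideanLin M)).le_opNorm x
  simpa [opNorm] using this

lemma aux_rayleigh_abs {n : ℕ} (M : Matrix (Fin n) (Fin n) ℝ) (x : EuclideanSpace ℝ (Fin n))
    (hx : ‖x‖ = 1) : |(inner ℝ ((Matrix.toEuclideanLin M) x) x : ℝ)| ≤ opNorm M := by
  calc |(inner ℝ ((Matrix.toEuclideanLin M) x) x : ℝ)| ≤ ‖Matrix.toEuclideanLin M x‖ * ‖x‖ :=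
        abs_real_inner_le_norm _ _
    _ ≤ (opNorm M * ‖x‖) * ‖x‖ :=
        mul_le_mul_of_nonneg_right (aux_norm_mul_le M x) (norm_nonneg x)
    _ = opNorm M := by rw [hx]; ring

lemma aux_bddAbove {n : ℕ} (M : Matrix (Fin n) (Fin n) ℝ) :
    BddAbove (Set.range fun x : {x : EuclideanSpace ℝ (Fin n) // ‖x‖ = 1} =>
      (inner ℝ ((Matrix.toEuclideanLin M) x.1) x.1 : ℝ)) := by
  refine ⟨opNorm M, ?_⟩
  rintro y ⟨⟨x, hx⟩, rfl⟩
  exact (abs_le.1 (aux_rayleigh_abs M x hx)).2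

lemma aux_bddBelow {n : ℕ} (M : Matrix (Fin n) (Fin n) ℝ) :
    BddBelow (Set.range fun x : {x : EuclideanSpace ℝ (Fin n) // ‖x‖ = 1} =>
      (inner ℝ ((Matrix.toEuclideanLin M) x.1) x.1 : ℝ)) := by
  refine ⟨-opNorm M, ?_⟩
  rintro y ⟨⟨x, hx⟩, rfl⟩
  exact (abs_le.1 (aux_rayleigh_abs M x hx)).1

lemma aux_lamMin_smul {n : ℕ} (M : Matrix (Fin n) (Fin n) ℝ) (x : EuclideanSpace ℝ (Fin n)) :
    lamMin M * ‖x‖ ^ 2 ≤ (inner ℝ ((Matrix.toEuclideanLin M) x) x : ℝ) := by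
  rcases eq_or_ne x 0 with rfl | hx
  · simp
  · have hnx : ‖x‖ ≠ 0 := norm_ne_zero_iff.2 hx
    set u : EuclideanSpace ℝ (Fin n) := ‖x‖⁻¹ • x with hu
    have hu1 : ‖u‖ = 1 := by
      rw [hu, norm_smul]; simp [abs_of_nonneg (norm_nonneg x), inv_mul_cancel₀ hnx]
    have h : lamMin M ≤ (inner ℝ ((Matrix.toEuclideanLin M) u) u : ℝ) :=
      ciInf_le (aux_bddBelow M) ⟨u, hu1⟩
    rw [hu, _root_.map_smul, inner_smul_left, inner_smul_right] at h
    have hx2 : (0:ℝ) < ‖x‖ ^ 2 := by positivity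
    rw [RCLike.conj_to_real] at h
    have h3 := mul_le_mul_of_nonneg_left h (le_of_lt hx2)
    have h4 : ‖x‖ ^ 2 * (‖x‖⁻¹ * (‖x‖⁻¹ * (inner ℝ ((Matrix.toEuclideanLin M) x) x : ℝ))) =
        (inner ℝ ((Matrix.toEuclideanLin M) x) x : ℝ) := by
      field_simp
    linarith [h3, h4]

lemma aux_smul_lamMax {n : ℕ} (M : Matrix (Fin n) (Fin n) ℝ) (x : EuclideanSpace ℝ (Fin n)) :
    (inner ℝ ((Matrix.toEuclideanLin M) x) x : ℝ) ≤ lamMax M * ‖x‖ ^ 2 := by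
  rcases eq_or_ne x 0 with rfl | hx
  · simp
  · have hnx : ‖x‖ ≠ 0 := norm_ne_zero_iff.2 hx
    set u : EuclideanSpace ℝ (Fin n) := ‖x‖⁻¹ • x with hu
    have hu1 : ‖u‖ = 1 := by
      rw [hu, norm_smul]; simp [abs_of_nonneg (norm_nonneg x), inv_mul_cancel₀ hnx]
    have h : (inner ℝ ((Matrix.toEuclideanLin M) u) u : ℝ) ≤ lamMax M :=
      le_ciSup (aux_bddAbove M) ⟨u, hu1⟩
    rw [hu, _root_.map_smul, inner_smul_left, inner_smul_right] at h
    have hx2 : (0:ℝ) < ‖x‖ ^ 2 := by positivity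
    rw [RCLike.conj_to_real] at h
    have h3 := mul_le_mul_of_nonneg_left h (le_of_lt hx2)
    have h4 : ‖x‖ ^ 2 * (‖x‖⁻¹ * (‖x‖⁻¹ * (inner ℝ ((Matrix.toEuclideanLin M) x) x : ℝ))) =
        (inner ℝ ((Matrix.toEuclideanLin M) x) x : ℝ) := by
      field_simp
    linarith [h3, h4]

lemma aux_inner_eq {n m : ℕ} (M : Matrix (Fin m) (Fin n) ℝ) (x : Fin n → ℝ) (y : Fin m → ℝ) :
    (inner ℝ ((Matrix.toEuclideanLin M) ((WithLp.equiv 2 _).symm x))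
      ((WithLp.equiv 2 _).symm y) : ℝ) = (M *ᵥ x) ⬝ᵥ y := by
  change inner ℝ (WithLp.toLp 2 (M *ᵥ x)) (WithLp.toLp 2 y) = _
  simp [EuclideanSpace.inner_toLp_toLp, dotProduct, mul_comm]

lemma aux_cs {n : ℕ} (P : Matrix (Fin n) (Fin n) ℝ)
    (hsym : LinearMap.IsSymmetric (Matrix.toEuclideanLin P))
    (hpsd : ∀ z : EuclideanSpace ℝ (Fin n), 0 ≤ (inner ℝ ((Matrix.toEuclideanLin P) z) z : ℝ))
    (a b : EuclideanSpace ℝ (Fin n)) :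
    (inner ℝ ((Matrix.toEuclideanLin P) a) b : ℝ) ^ 2 ≤
      (inner ℝ ((Matrix.toEuclideanLin P) a) a : ℝ) *
        (inner ℝ ((Matrix.toEuclideanLin P) b) b : ℝ) := by
  set f := Matrix.toEuclideanLin P
  have key : ∀ t : ℝ, 0 ≤ (inner ℝ (f b) b : ℝ) * (t * t) + (2 * (inner ℝ (f a) b : ℝ)) * t
      + (inner ℝ (f a) a : ℝ) := by
    intro t
    have h0 := hpsd (a + t • b)
    have hba : (inner ℝ (f b) a : ℝ) = (inner ℝ (f a) b : ℝ) := by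
      rw [hsym b a, real_inner_comm]
    rw [map_add, _root_.map_smul, inner_add_left, inner_add_right, inner_add_right,
      inner_smul_left, inner_smul_right, inner_smul_left, inner_smul_right] at h0
    simp only [RCLike.conj_to_real] at h0
    rw [hba] at h0
    nlinarith [h0]
  have hd := discrim_le_zero key
  rw [discrim] at hd
  nlinarith [hd]

lemma aux_inner_le_lamMax {n : ℕ} (P : Matrix (Fin n) (Fin n) ℝ)
    (hsym : LinearMap.IsSymmetric (Matrix.toEuclideanLin P))
    (hpsd : ∀ z : EuclideanSpace ℝ (Fin n), 0 ≤ (inner ℝ ((Matrix.toEuclideanLin P) z) z : ℝ))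
    (hl : 0 ≤ lamMax P) (a b : EuclideanSpace ℝ (Fin n)) :
    (inner ℝ ((Matrix.toEuclideanLin P) a) b : ℝ) ≤ lamMax P * ‖a‖ * ‖b‖ := by
  have cs := aux_cs P hsym hpsd a b
  have h1 := aux_smul_lamMax P a
  have h2 := aux_smul_lamMax P b
  have hna := norm_nonneg a
  have hnb := norm_nonneg b
  nlinarith [cs, h1, h2, hpsd a, hpsd b, hna, hnb, hl,
    mul_nonneg (mul_nonneg hl hna) hnb,
    sq_nonneg ((inner ℝ ((Matrix.toEuclideanLin P) a) b : ℝ) - lamMax P * ‖a‖ * ‖b‖),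
    sq_nonneg ((inner ℝ ((Matrix.toEuclideanLin P) a) b : ℝ) + lamMax P * ‖a‖ * ‖b‖),
    mul_nonneg (mul_nonneg (mul_nonneg hl hna) hnb) (mul_nonneg (mul_nonneg hl hna) hnb)]

lemma aux_re_dot {n : ℕ} (R : Matrix (Fin n) (Fin n) ℝ) (v : Fin n → ℂ) :
    (star v ⬝ᵥ ((R.map Complex.ofReal) *ᵥ v)).re =
      (fun i => (v i).re) ⬝ᵥ (R *ᵥ fun i => (v i).re) +
      (fun i => (v i).im) ⬝ᵥ (R *ᵥ fun i => (v i).im) := by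
  simp only [dotProduct, mulVec, Matrix.map_apply, Pi.star_apply, Finset.mul_sum,
    Complex.re_sum]
  rw [← Finset.sum_add_distrib]
  refine Finset.sum_congr rfl fun i _ => ?_
  rw [← Finset.sum_add_distrib]
  refine Finset.sum_congr rfl fun j _ => ?_
  simp only [Complex.mul_re, Complex.mul_im, Complex.ofReal_re, Complex.ofReal_im,
    RCLike.star_def, Complex.conj_re, Complex.conj_im]
  ring

lemma aux_posdef_complex {n : ℕ} {R : Matrix (Fin n) (Fin n) ℝ} (hR : R.PosDef)
    {v : Fin n → ℂ} (hv : v ≠ 0) :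
    0 < (star v ⬝ᵥ ((R.map Complex.ofReal) *ᵥ v)).re := by
  rw [aux_re_dot]
  set a : Fin n → ℝ := fun i => (v i).re with ha
  set b : Fin n → ℝ := fun i => (v i).im with hb
  have hab : a ≠ 0 ∨ b ≠ 0 := by
    by_contra hcon
    push_neg at hcon
    apply hv
    funext i
    have h1 := congrFun hcon.1 i
    have h2 := congrFun hcon.2 i
    exact Complex.ext (by simpa [ha] using h1) (by simpa [hb] using h2)
  have hpa : 0 ≤ a ⬝ᵥ (R *ᵥ a) := by
    have := hR.posSemidef.dotProduct_mulVec_nonneg a; rwa [star_trivial] at this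
  have hpb : 0 ≤ b ⬝ᵥ (R *ᵥ b) := by
    have := hR.posSemidef.dotProduct_mulVec_nonneg b; rwa [star_trivial] at this
  rcases hab with h | h
  · have := hR.dotProduct_mulVec_pos h; rw [star_trivial] at this; linarith
  · have := hR.dotProduct_mulVec_pos h; rw [star_trivial] at this; linarith

lemma aux_mulVec_star {n : ℕ} (R : Matrix (Fin n) (Fin n) ℝ) (v : Fin n → ℂ) :
    (R.map Complex.ofReal) *ᵥ (star v) = star ((R.map Complex.ofReal) *ᵥ v) := by
  funext i
  simp only [mulVec, dotProduct, Pi.star_apply, Matrix.map_apply, star_sum, star_mul',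
    Complex.star_def, Complex.conj_ofReal]

lemma aux_eigenvec {n : ℕ} (Acl : Matrix (Fin n) (Fin n) ℝ) (μ : ℂ)
    (hroot : (((Acl.map Complex.ofReal)).charpoly).IsRoot μ) :
    ∃ v : Fin n → ℂ, v ≠ 0 ∧ (Acl.map Complex.ofReal) *ᵥ v = μ • v := by
  set Ac := Acl.map Complex.ofReal
  have h1 : (Ac.charpoly).eval μ = (Matrix.scalar (Fin n) μ - Ac).det := by
    rw [Matrix.charpoly, eval_det, matPolyEquiv_charmatrix]
    simp
  have hdet : (Matrix.scalar (Fin n) μ - Ac).det = 0 := by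
    rw [← h1]; exact hroot
  obtain ⟨v, hv0, hveq⟩ := (Matrix.exists_mulVec_eq_zero_iff).2 hdet
  refine ⟨v, hv0, ?_⟩
  rw [Matrix.sub_mulVec] at hveq
  have hsc : (Matrix.scalar (Fin n) μ) *ᵥ v = μ • v := by
    funext i
    simp [Matrix.scalar, Matrix.mulVec_diagonal]
  rw [hsc] at hveq
  exact (sub_eq_zero.mp hveq).symm

/-- Theorem 2 of the paper (common stability margin `β`): under the Riccati equation and
`‖B L + H‖ < λmin(Q)/(2 λmax(P)) − β`, the closed loop with `K = −(1/2) Bᵀ P` satisfies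
the Lyapunov inequality with margin `β`, and every eigenvalue of `A + H + B(K+L)` has
real part less than `−β`. -/
theorem riccati_margin_stability {n m : ℕ} (A H : Matrix (Fin n) (Fin n) ℝ)
    (B : Matrix (Fin n) (Fin m) ℝ) (L : Matrix (Fin m) (Fin n) ℝ)
    (P Q : Matrix (Fin n) (Fin n) ℝ) (β : ℝ) (hβ : 0 ≤ β)
    (hP : P.PosDef) (hQ : Q.PosDef)
    (hric : Aᵀ * P + P * A - P * B * Bᵀ * P + Q = 0)
    (hnorm : opNorm (B * L + H) < lamMin Q / (2 * lamMax P) - β)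
    (K : Matrix (Fin m) (Fin n) ℝ) (hK : K = -((1/2 : ℝ) • (Bᵀ * P))) :
    (-((A + H + B * (K + L))ᵀ * P + P * (A + H + B * (K + L)) + (2 * β) • P)).PosDef ∧
    ∀ μ : ℂ, (((A + H + B * (K + L)).map (Complex.ofReal)).charpoly).IsRoot μ →
      μ.re < -β := by
  have hPt : Pᵀ = P := by
    rw [← Matrix.conjTranspose_eq_transpose_of_trivial]; exact hP.1
  have hQt : Qᵀ = Q := by
    rw [← Matrix.conjTranspose_eq_transpose_of_trivial]; exact hQ.1
  have key : -((A + H + B * (K + L))ᵀ * P + P * (A + H + B * (K + L)) + (2 * β) • P)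
      = Q - ((B*L+H)ᵀ * P + P * (B*L+H) + (2*β) • P) := by
    have hQ' : Q = P * B * Bᵀ * P - Aᵀ * P - P * A := by
      linear_combination (norm := noncomm_ring) hric
    subst hK
    rw [hQ']
    simp only [Matrix.transpose_add, Matrix.transpose_mul, Matrix.transpose_neg,
      Matrix.transpose_smul, Matrix.transpose_transpose, hPt, Matrix.add_mul, Matrix.mul_add,
      Matrix.neg_mul, Matrix.mul_neg, Matrix.smul_mul, Matrix.mul_smul, Matrix.mul_assoc]
    module
  -- symmetry as a linear map
  have hsym : LinearMap.IsSymmetric (Matrix.toEuclideanLin P) :=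
    Matrix.isHermitian_iff_isSymmetric.1 hP.1
  have hpsd : ∀ z : EuclideanSpace ℝ (Fin n),
      0 ≤ (inner ℝ ((Matrix.toEuclideanLin P) z) z : ℝ) := by
    intro z
    have h := hP.posSemidef.dotProduct_mulVec_nonneg ((WithLp.equiv 2 (Fin n → ℝ)) z)
    rw [star_trivial] at h
    have hz : z = (WithLp.equiv 2 (Fin n → ℝ)).symm ((WithLp.equiv 2 (Fin n → ℝ)) z) :=
      ((WithLp.equiv 2 (Fin n → ℝ)).symm_apply_apply z).symm
    rw [hz, aux_inner_eq]
    rwa [dotProduct_comm]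
  have hposdef :
      (-((A + H + B * (K + L))ᵀ * P + P * (A + H + B * (K + L)) + (2 * β) • P)).PosDef := by
    rw [key]
    refine posDef_iff_dotProduct_mulVec.mpr ⟨?_, ?_⟩
    · show _ᴴ = _
      rw [Matrix.conjTranspose_eq_transpose_of_trivial]
      simp only [Matrix.transpose_sub, Matrix.transpose_add, Matrix.transpose_mul,
        Matrix.transpose_smul, Matrix.transpose_transpose, hPt, hQt]
      abel
    · intro x hx
      rw [star_trivial]
      set M' := B * L + H with hM'
      -- expansion
      have e1 : x ⬝ᵥ ((M'ᵀ * P) *ᵥ x) = (M' *ᵥ x) ⬝ᵥ (P *ᵥ x) := by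
        rw [← Matrix.mulVec_mulVec, Matrix.dotProduct_mulVec, Matrix.vecMul_transpose]
      have e2 : x ⬝ᵥ ((P * M') *ᵥ x) = (P *ᵥ x) ⬝ᵥ (M' *ᵥ x) := by
        rw [← Matrix.mulVec_mulVec, Matrix.dotProduct_mulVec]
        congr 1
        rw [← Matrix.mulVec_transpose, hPt]
      have expand : x ⬝ᵥ ((Q - (M'ᵀ * P + P * M' + (2*β) • P)) *ᵥ x)
          = x ⬝ᵥ (Q *ᵥ x) - (M' *ᵥ x) ⬝ᵥ (P *ᵥ x) - (P *ᵥ x) ⬝ᵥ (M' *ᵥ x)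
            - (2*β) * (x ⬝ᵥ (P *ᵥ x)) := by
        rw [Matrix.sub_mulVec, Matrix.add_mulVec, Matrix.add_mulVec,
          Matrix.smul_mulVec, dotProduct_sub, dotProduct_add,
          dotProduct_add, dotProduct_smul, e1, e2, smul_eq_mul]
        ring
      rw [expand]
      -- the Euclidean vectors
      set X : EuclideanSpace ℝ (Fin n) := (WithLp.equiv 2 (Fin n → ℝ)).symm x with hX
      set Y : EuclideanSpace ℝ (Fin n) := (WithLp.equiv 2 (Fin n → ℝ)).symm (M' *ᵥ x) with hY
      have hXne : X ≠ 0 := by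
        intro h; apply hx; simpa [hX] using congrArg WithLp.ofLp h
      have hXpos : (0:ℝ) < ‖X‖ := norm_pos_iff.mpr hXne
      have hX2 : (0:ℝ) < ‖X‖ ^ 2 := pow_pos hXpos 2
      have bQ : lamMin Q * ‖X‖ ^ 2 ≤ x ⬝ᵥ (Q *ᵥ x) := by
        have h := aux_lamMin_smul Q X
        rw [hX, aux_inner_eq, dotProduct_comm] at h
        exact h
      have bP : x ⬝ᵥ (P *ᵥ x) ≤ lamMax P * ‖X‖ ^ 2 := by
        have h := aux_smul_lamMax P X
        rw [hX, aux_inner_eq, dotProduct_comm] at h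
        exact h
      have bPpos : 0 < x ⬝ᵥ (P *ᵥ x) := by
        have := hP.dotProduct_mulVec_pos hx; rwa [star_trivial] at this
      have hlam : 0 < lamMax P := by nlinarith [bP, bPpos, hX2]
      have hYle : ‖Y‖ ≤ opNorm M' * ‖X‖ := by
        have h := aux_norm_mul_le M' X
        rw [hX] at h
        exact h
      have bPM : (P *ᵥ x) ⬝ᵥ (M' *ᵥ x) ≤ lamMax P * (opNorm M' * (‖X‖ * ‖X‖)) := by
        have h := aux_inner_le_lamMax P hsym hpsd (le_of_lt hlam) X Y
        rw [hX, hY, aux_inner_eq] at h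
        have h2 : lamMax P * ‖X‖ * ‖Y‖ ≤ lamMax P * ‖X‖ * (opNorm M' * ‖X‖) := by
          apply mul_le_mul_of_nonneg_left hYle
          exact mul_nonneg (le_of_lt hlam) (norm_nonneg _)
        calc (P *ᵥ x) ⬝ᵥ (M' *ᵥ x) ≤ lamMax P * ‖X‖ * ‖Y‖ := h
          _ ≤ lamMax P * ‖X‖ * (opNorm M' * ‖X‖) := h2
          _ = lamMax P * (opNorm M' * (‖X‖ * ‖X‖)) := by ring
      have bPM' : (M' *ᵥ x) ⬝ᵥ (P *ᵥ x) ≤ lamMax P * (opNorm M' * (‖X‖ * ‖X‖)) := by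
        rw [dotProduct_comm]; exact bPM
      have hkey : 2 * lamMax P * (opNorm M' + β) < lamMin Q := by
        have h2 : opNorm M' + β < lamMin Q / (2 * lamMax P) := by
          rw [hM']; linarith [hnorm]
        have h3 : (opNorm M' + β) * (2 * lamMax P) < lamMin Q := by
          rw [← lt_div_iff₀ (by positivity)]
          exact h2
        linarith [h3]
      have hXsq : ‖X‖ * ‖X‖ = ‖X‖ ^ 2 := by ring
      nlinarith [bQ, bP, bPM, bPM', hkey, hX2, hβ, hlam,
        mul_lt_mul_of_pos_right hkey hX2,
        mul_le_mul_of_nonneg_left bP (mul_nonneg (by norm_num : (0:ℝ) ≤ 2) hβ)]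
  refine ⟨hposdef, ?_⟩
  intro μ hroot
  set Acl := A + H + B * (K + L) with hAcl
  set Ac := Acl.map Complex.ofReal with hAc
  set Pc := P.map Complex.ofReal with hPc
  obtain ⟨v, hv0, hAv⟩ := aux_eigenvec Acl μ hroot
  set p : ℂ := star v ⬝ᵥ (Pc *ᵥ v) with hp
  have hppos : 0 < p.re := aux_posdef_complex hP hv0
  have hs := aux_posdef_complex hposdef hv0
  set N := -(Aclᵀ * P + P * Acl + (2 * β) • P) with hN
  have hmap : N.map Complex.ofReal = -(Acᵀ * Pc + Pc * Ac + ((2*β : ℝ) : ℂ) • Pc) := by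
    ext i j
    simp only [hN, hAc, hPc, Matrix.map_apply, Matrix.neg_apply, Matrix.add_apply,
      Matrix.smul_apply, Matrix.mul_apply, Matrix.transpose_apply, smul_eq_mul]
    push_cast
    ring
  have t1 : star v ⬝ᵥ ((Acᵀ * Pc) *ᵥ v) = (starRingEnd ℂ) μ * p := by
    rw [← Matrix.mulVec_mulVec, Matrix.dotProduct_mulVec, Matrix.vecMul_transpose,
      hAc, aux_mulVec_star]
    rw [show Acl.map Complex.ofReal *ᵥ v = μ • v from hAv]
    rw [star_smul, smul_dotProduct, hp, smul_eq_mul]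
    rfl
  have t2 : star v ⬝ᵥ ((Pc * Ac) *ᵥ v) = μ * p := by
    rw [← Matrix.mulVec_mulVec, hAv, Matrix.mulVec_smul, dotProduct_smul,
      hp, smul_eq_mul]
  have t3 : star v ⬝ᵥ ((((2*β : ℝ) : ℂ) • Pc) *ᵥ v) = ((2*β : ℝ) : ℂ) * p := by
    rw [Matrix.smul_mulVec, dotProduct_smul, hp, smul_eq_mul]
  have hs2 : star v ⬝ᵥ ((N.map Complex.ofReal) *ᵥ v)
      = -((starRingEnd ℂ) μ * p + μ * p + ((2*β : ℝ) : ℂ) * p) := by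
    rw [hmap, Matrix.neg_mulVec, dotProduct_neg, Matrix.add_mulVec,
      Matrix.add_mulVec, dotProduct_add, dotProduct_add, t1, t2, t3]
  rw [hs2] at hs
  simp only [Complex.neg_re, Complex.add_re, Complex.mul_re, Complex.conj_re,
    Complex.conj_im, Complex.ofReal_re, Complex.ofReal_im] at hs
  nlinarith [hs, hppos]
end
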